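/- Let R be a commutative integral domain, t,s units of R, c₀ ∈ R, and define a*b = t·a + s·b + c₀ for a,b ∈ R. Then the right Bol identity E25, namely x*((y*z)*y) = ((x*y)*z)*y for all x,y,z ∈ R, holds if and only if s = 1 and t² = 1 (with no restriction on c₀). -/
import Mathlib


/-- The affine operation `a * b = t·a + s·b + c₀` on a commutative integral domain. -/
def affOp {R : Type*} [CommRing R] (t s c₀ : R) (a b : R) : R := t * a + s * b + c₀

/-- An affine quasigroup over an integral domain satisfies the right Bol identity E25,
`x((yz)y) = ((xy)z)y`, iff `s = 1` and `t² = 1`. -/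
theorem affine_E25_iff {R : Type*} [CommRing R] [IsDomain R]
    (t s c₀ : R) (ht : IsUnit t) (hs : IsUnit s) :
    (∀ x y z : R,
        affOp t s c₀ x (affOp t s c₀ (affOp t s c₀ y z) y) =
          affOp t s c₀ (affOp t s c₀ (affOp t s c₀ x y) z) y) ↔
      (s = 1 ∧ t ^ 2 = 1) := by
  simp only [affOp]
  constructor
  · intro h
    have h0 := h 0 0 0
    have h1 := h 1 0 0
    have h2 := h 0 0 1
    ring_nf at h0 h1 h2
    -- derive t = t^3 and s^2 * t = t * s
    have ht3 : t = t ^ 3 := by linear_combination h1 - h0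
    have hst : s ^ 2 * t = t * s := by linear_combination h2 - h0
    have hs1 : s = 1 := by
      have : t * (s * (s - 1)) = 0 := by ring_nf; linear_combination hst
      rcases mul_eq_zero.mp this with h' | h'
      · exact absurd h' ht.ne_zero
      rcases mul_eq_zero.mp h' with h' | h'
      · exact absurd h' hs.ne_zero
      · exact sub_eq_zero.mp h'
    have ht2 : t ^ 2 = 1 := by
      have : t * (t ^ 2 - 1) = 0 := by linear_combination -ht3
      rcases mul_eq_zero.mp this with h' | h'
      · exact absurd h' ht.ne_zero
      · exact sub_eq_zero.mp h'
    exact ⟨hs1, ht2⟩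
  · rintro ⟨rfl, ht2⟩ x y z
    ring_nf
    linear_combination (-(x * t) - c₀) * ht2
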